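/- There is no finite nonempty sequence μ₁, …, μ_r of probability mass functions on the symmetric group S₃, where each μ_i is either (a) a point mass δ_π for some permutation π ∈ S₃ (a deterministic permutation), (b) the uniform distribution on {id, τ} for some transposition τ ∈ S₃ (a 2-card random cut), or (c) the uniform distribution on {id, c, c²} for some 3-cycle c ∈ S₃ (a 3-card random cut), such that the iterated convolution μ₁ * μ₂ * ⋯ * μ_r equals the uniform distribution on the two-element set {id, (1 2 3)}. -/

import Mathlib

open Finset

variable {G : Type*} [Group G] [Fintype G] [DecidableEq G]

/-- Convolution of two mass functions on a finite group:
`(μ * ν)(g) = ∑ h, μ(h) · ν(h⁻¹ g)`. -/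
def convol (μ ν : G → ℝ) : G → ℝ := fun g => ∑ h : G, μ h * ν (h⁻¹ * g)

/-- Point mass `δ_π`. -/
def delta (π : G) : G → ℝ := fun g => if g = π then 1 else 0

/-- Uniform distribution on a finite subset `S`: probability `1/|S|` on each
element of `S` and `0` elsewhere. -/
noncomputable def unif (S : Finset G) : G → ℝ := fun g => if g ∈ S then (S.card : ℝ)⁻¹ else 0

/-- Iterated convolution `μ₁ * μ₂ * ⋯ * μ_r` of a list of mass functions
(the empty list yields the point mass at the identity, a neutral element
for convolution). -/
noncomputable def convList (L : List (G → ℝ)) : G → ℝ := L.foldr convol (delta 1)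

/-- `μ` is a probability mass function on the finite group `G`. -/
def IsPMF (μ : G → ℝ) : Prop := (∀ g, 0 ≤ μ g) ∧ ∑ g, μ g = 1

namespace Aux
abbrev P3 := Equiv.Perm (Fin 3)
noncomputable def sgnSum (μ : P3 → ℝ) : ℝ := ∑ g : P3, ((Equiv.Perm.sign g : ℤ) : ℝ) * μ g

lemma sgnSum_convol (μ ν : P3 → ℝ) : sgnSum (convol μ ν) = sgnSum μ * sgnSum ν := by
  unfold sgnSum convol
  rw [Finset.sum_mul_sum]
  rw [show (∑ g : P3, ((Equiv.Perm.sign g : ℤ):ℝ) * ∑ h : P3, μ h * ν (h⁻¹ * g))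
      = ∑ h : P3, ∑ g : P3, ((Equiv.Perm.sign g : ℤ):ℝ) * (μ h * ν (h⁻¹ * g)) from by
    rw [Finset.sum_comm]; exact Finset.sum_congr rfl fun g _ => Finset.mul_sum _ _ _]
  refine Finset.sum_congr rfl fun h _ => ?_
  rw [← Equiv.sum_comp (Equiv.mulLeft h)
    (fun g => ((Equiv.Perm.sign g : ℤ):ℝ) * (μ h * ν (h⁻¹ * g)))]
  refine Finset.sum_congr rfl fun k _ => ?_
  simp only [Equiv.coe_mulLeft, inv_mul_cancel_left, map_mul]
  push_cast
  ring

lemma sgnSum_zero_mem {L : List (P3 → ℝ)} {μ : P3 → ℝ} (hμ : μ ∈ L) (h0 : sgnSum μ = 0) :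
    sgnSum (convList L) = 0 := by
  induction L with
  | nil => simp at hμ
  | cons a t ih =>
    have hc : convList (a :: t) = convol a (convList t) := rfl
    rw [hc, sgnSum_convol]
    rcases List.mem_cons.mp hμ with h | hμ'
    · rw [← h, h0, zero_mul]
    · rw [ih hμ', mul_zero]

lemma sgnSum_unif_pair_swap {τ : P3} (hτ : τ.IsSwap) : sgnSum (unif {1, τ}) = 0 := by
  obtain ⟨x, y, hxy, rfl⟩ := hτ
  have hne : (1 : P3) ≠ Equiv.swap x y := by
    intro h
    have h2 := Equiv.Perm.sign_swap hxy
    rw [← h] at h2; simp at h2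
  unfold sgnSum unif
  simp only [mul_ite, mul_zero]
  rw [Finset.sum_ite_mem, Finset.univ_inter, Finset.sum_pair hne]
  simp [Equiv.Perm.sign_swap hxy]

lemma sgnSum_target : sgnSum (unif {1, finRotate 3}) = 1 := by
  have hne : (1 : P3) ≠ finRotate 3 := by decide
  unfold sgnSum unif
  simp only [mul_ite, mul_zero]
  rw [Finset.sum_ite_mem, Finset.univ_inter, Finset.sum_pair hne,
    show ({1, finRotate 3} : Finset P3).card = 2 from by decide]
  norm_num [show Equiv.Perm.sign (finRotate 3) = 1 from by decide]

/-- left invariance under finRotate 3 -/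
def Inv (μ : P3 → ℝ) : Prop := ∀ g, μ (finRotate 3 * g) = μ g

lemma inv_convol {ν : P3 → ℝ} (μ : P3 → ℝ) (hν : Inv ν) : Inv (convol μ ν) := by
  intro g
  unfold convol
  refine Finset.sum_congr rfl fun h _ => ?_
  congr 1
  have key : h⁻¹ * (finRotate 3 * g) = (h⁻¹ * finRotate 3 * h) * (h⁻¹ * g) := by group
  have hconj : ∀ h : P3, h⁻¹ * finRotate 3 * h = finRotate 3 ∨
      h⁻¹ * finRotate 3 * h = (finRotate 3)^2 := by decide
  rcases hconj h with hc | hc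
  · rw [key, hc]; exact hν _
  · rw [key, hc, pow_two, mul_assoc]
    rw [hν _, hν _]

lemma inv_convol_threecut {c : P3} (hc3 : c^3 = 1) (hc1 : c ≠ 1) (ν : P3 → ℝ) :
    Inv (convol (unif {1, c, c^2}) ν) := by
  have hmem : ∀ x : P3, (finRotate 3 * x ∈ ({1,c,c^2} : Finset P3) ↔
      x ∈ ({1,c,c^2} : Finset P3)) := by revert hc3 hc1; revert c; decide
  intro g
  unfold convol
  rw [← Equiv.sum_comp (Equiv.mulLeft (finRotate 3))
    (fun h => unif {1,c,c^2} h * ν (h⁻¹ * (finRotate 3 * g)))]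
  refine Finset.sum_congr rfl fun h _ => ?_
  simp only [Equiv.coe_mulLeft]
  congr 1
  · unfold unif
    simp only [hmem h]
  · congr 1
    group

lemma inv_foldr (L : List (P3 → ℝ)) {init : P3 → ℝ} (h : Inv init) :
    Inv (L.foldr convol init) := by
  induction L with
  | nil => exact h
  | cons a t ih => exact inv_convol a ih

lemma delta_convol (π : P3) (ν : P3 → ℝ) (g : P3) : convol (delta π) ν g = ν (π⁻¹ * g) := by
  unfold convol delta
  simp only [ite_mul, one_mul, zero_mul]
  rw [Finset.sum_ite_eq' Finset.univ π (fun h => ν (h⁻¹ * g))]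
  simp

lemma convList_deltas {L : List (P3 → ℝ)} (h : ∀ μ ∈ L, ∃ π : P3, μ = delta π) :
    ∀ g, convList L g = 0 ∨ convList L g = 1 := by
  induction L with
  | nil =>
    intro g
    unfold convList delta
    simp only [List.foldr_nil]
    split <;> simp
  | cons a t ih =>
    intro g
    obtain ⟨π, rfl⟩ := h a List.mem_cons_self
    have hc : convList (delta π :: t) = convol (delta π) (convList t) := rfl
    rw [hc, delta_convol]
    exact ih (fun μ hμ => h μ (List.mem_cons_of_mem _ hμ)) _

end Aux

/-- The shuffle `{id, (1 2 3)}` cannot be realized by any finite nonempty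
sequence of deterministic permutations and 2- or 3-card random cuts on `S₃`. -/
theorem stmt2 :
    ¬ ∃ L : List (Equiv.Perm (Fin 3) → ℝ), L ≠ [] ∧
      (∀ μ ∈ L,
        (∃ π : Equiv.Perm (Fin 3), μ = delta π) ∨
        (∃ τ : Equiv.Perm (Fin 3), τ.IsSwap ∧ μ = unif {1, τ}) ∨
        (∃ c : Equiv.Perm (Fin 3), c.IsThreeCycle ∧ μ = unif {1, c, c ^ 2})) ∧
      convList L = unif {1, finRotate 3} := by
  rintro ⟨L, -, hall, heq⟩
  by_cases h2 : ∃ μ ∈ L, ∃ τ : Aux.P3, τ.IsSwap ∧ μ = unif {1, τ}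
  · obtain ⟨μ, hμL, τ, hτ, rfl⟩ := h2
    have h0 := Aux.sgnSum_zero_mem hμL (Aux.sgnSum_unif_pair_swap hτ)
    rw [heq, Aux.sgnSum_target] at h0
    norm_num at h0
  by_cases h3 : ∃ μ ∈ L, ∃ c : Aux.P3, c.IsThreeCycle ∧ μ = unif {1, c, c ^ 2}
  · obtain ⟨μ, hμL, c, hc, rfl⟩ := h3
    obtain ⟨s, t, rfl⟩ := List.append_of_mem hμL
    have hord := hc.orderOf
    have hc3 : c ^ 3 = 1 := by have h := pow_orderOf_eq_one c; rwa [hord] at h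
    have hc1 : c ≠ 1 := by intro h; rw [h, orderOf_one] at hord; norm_num at hord
    have hfold : convList (s ++ unif {1, c, c ^ 2} :: t) =
        s.foldr convol (convol (unif {1, c, c ^ 2}) (convList t)) := by
      unfold convList
      rw [List.foldr_append]
      rfl
    have hInv : Aux.Inv (convList (s ++ unif {1, c, c ^ 2} :: t)) := by
      rw [hfold]
      exact Aux.inv_foldr s (Aux.inv_convol_threecut hc3 hc1 (convList t))
    rw [heq] at hInv
    have hval := hInv (finRotate 3)
    unfold unif at hval
    rw [if_neg (show finRotate 3 * finRotate 3 ∉ ({1, finRotate 3} : Finset Aux.P3) from by decide),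
      if_pos (show finRotate 3 ∈ ({1, finRotate 3} : Finset Aux.P3) from by decide),
      show ({1, finRotate 3} : Finset Aux.P3).card = 2 from by decide] at hval
    norm_num at hval
  · push_neg at h2 h3
    have hdel : ∀ μ ∈ L, ∃ π : Aux.P3, μ = delta π := by
      intro μ hμ
      rcases hall μ hμ with h | ⟨τ, hτ, h⟩ | ⟨c, hc, h⟩
      · exact h
      · exact absurd h (h2 μ hμ τ hτ)
      · exact absurd h (h3 μ hμ c hc)
    have := Aux.convList_deltas hdel 1
    rw [heq] at this
    unfold unif at this
    rw [if_pos (show (1 : Aux.P3) ∈ ({1, finRotate 3} : Finset Aux.P3) from by decide),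
      show ({1, finRotate 3} : Finset Aux.P3).card = 2 from by decide] at this
    norm_num at this
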